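/- Let X and Y be compact Hausdorff spaces and let φ : Y → X be a continuous surjection, so that the induced unital *-homomorphism φ* : C(X) → C(Y), f ↦ f ∘ φ, is injective and gives an inclusion φ*(C(X)) ⊆ C(Y) of commutative unital C*-algebras. Then the inclusion φ*(C(X)) ⊆ C(Y) has real rank zero if and only if there exists a closed unital *-subalgebra D of C(Y) with φ*(C(X)) ⊆ D ⊆ C(Y) whose Gelfand spectrum (character space) is totally disconnected. -/

import Mathlib

open Filter Topology
open scoped ComplexOrder

section Defs

variable {B : Type*} [NonUnitalNormedRing B] [StarRing B] [PartialOrder B]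

/-- A projection in a C*-algebra: a self-adjoint idempotent. -/
def IsProjection (p : B) : Prop := star p = p ∧ p * p = p

/-- The hereditary subalgebra `cl(a·S·a)`: the norm closure of `{a * b * a : b ∈ S}`. -/
def herSub (S : Set B) (a : B) : Set B := closure {x : B | ∃ b ∈ S, x = a * b * a}

/-- `T` has an approximate unit of projections. -/
def HasApproxUnitOfProjections (T : Set B) : Prop :=
  ∀ x ∈ T, 0 ≤ x → ∀ ε : ℝ, 0 < ε → ∃ p ∈ T, IsProjection p ∧ ‖p * x - x‖ < ε

/-- The inclusion `A ⊆ S` of C*-algebras has real rank zero. -/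
def InclusionRealRankZero (A S : Set B) : Prop :=
  ∀ a ∈ A, 0 ≤ a → a ≠ 0 → HasApproxUnitOfProjections (herSub S a)

end Defs

set_option linter.unusedSectionVars false
set_option synthInstance.maxHeartbeats 1000000
set_option maxHeartbeats 1000000

lemma compact_subset_clopen {H : Type*} [TopologicalSpace H] [CompactSpace H] [T2Space H]
    [TotallyDisconnectedSpace H] {K W : Set H} (hK : IsCompact K) (hW : IsOpen W)
    (hKW : K ⊆ W) : ∃ V : Set H, IsClopen V ∧ K ⊆ V ∧ V ⊆ W := by
  have hx : ∀ x : H, x ∈ K → ∃ V : Set H, IsClopen V ∧ x ∈ V ∧ V ⊆ W := fun x hx =>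
    compact_exists_isClopen_in_isOpen hW (hKW hx)
  choose! V hV hxV hVW using hx
  obtain ⟨t, ht⟩ := hK.elim_finite_subcover (fun x : K => V x)
    (fun x => (hV x x.2).isOpen) (fun x hxK => Set.mem_iUnion.mpr ⟨⟨x, hxK⟩, hxV x hxK⟩)
  refine ⟨⋃ x ∈ t, V x, ?_, ht, Set.iUnion₂_subset fun x _ => hVW x x.2⟩
  exact (t : Finset K).finite_toSet.isClopen_biUnion (fun x hx => hV x x.2)

section Aux
variable {Y : Type*} [TopologicalSpace Y] [CompactSpace Y]

open Classical in
lemma clopen_if_continuous {U : Set Y} (hU : IsClopen U) (f g : Y → ℂ)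
    (hf : ∀ y ∈ U, ContinuousAt f y) (hg : ∀ y ∈ Uᶜ, ContinuousAt g y) :
    Continuous fun y => if y ∈ U then f y else g y := by
  refine (continuous_iff_continuousAt).mpr fun y => ?_
  by_cases hy : y ∈ U
  · refine (hf y hy).congr ?_
    filter_upwards [hU.isOpen.mem_nhds hy] with z hz
    simp [if_pos hz]
  · refine (hg y hy).congr ?_
    filter_upwards [hU.compl.isOpen.mem_nhds hy] with z hz
    simp [if_neg (Set.mem_compl_iff _ _ |>.mp hz)]

open Classical in
/-- indicator of a clopen set as a continuous map -/
noncomputable def indC (U : Set Y) (hU : IsClopen U) : C(Y, ℂ) :=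
  ⟨fun y => if y ∈ U then 1 else 0,
    clopen_if_continuous hU _ _ (fun _ _ => continuousAt_const) (fun _ _ => continuousAt_const)⟩

open Classical in
lemma indC_apply {U : Set Y} (hU : IsClopen U) (y : Y) :
    indC U hU y = if y ∈ U then 1 else 0 := by
  simp [indC]

lemma indC_isProjection {U : Set Y} (hU : IsClopen U) : IsProjection (indC U hU) := by
  constructor
  · ext y
    simp only [ContinuousMap.star_apply, indC_apply]
    split <;> simp
  · ext y
    simp only [ContinuousMap.mul_apply, indC_apply]
    split <;> simp

lemma indC_mem_herSub {a : C(Y,ℂ)} {U : Set Y} (hU : IsClopen U) (ha : ∀ y ∈ U, a y ≠ 0) :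
    indC U hU ∈ herSub Set.univ a := by
  classical
  apply subset_closure
  refine ⟨⟨fun y => if y ∈ U then (a y * a y)⁻¹ else 0,
    clopen_if_continuous hU _ _ (fun y hy => ContinuousAt.inv₀
      ((a.continuous.mul a.continuous).continuousAt) (mul_ne_zero (ha y hy) (ha y hy)))
      (fun _ _ => continuousAt_const)⟩, Set.mem_univ _, ?_⟩
  ext y
  by_cases hy : y ∈ U
  · simp only [ContinuousMap.mul_apply, ContinuousMap.coe_mk, indC_apply, if_pos hy]
    field_simp [ha y hy]
  · simp [indC_apply, if_neg hy]

lemma nonneg_apply {g : C(Y,ℂ)} (hg : 0 ≤ g) (y : Y) : (g y).im = 0 ∧ 0 ≤ (g y).re := by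
  have := (ContinuousMap.le_def.mp hg) y
  rw [Complex.le_def] at this
  exact ⟨by simpa using this.2.symm, by simpa using this.1⟩

lemma proj_values {p : C(Y,ℂ)} (hp : IsProjection p) (y : Y) : p y = 0 ∨ p y = 1 := by
  have h : p y * p y = p y := by
    have := congrArg (fun q : C(Y,ℂ) => q y) hp.2
    simpa using this
  have h2 : p y * (p y - 1) = 0 := by linear_combination h
  rcases mul_eq_zero.mp h2 with h' | h'
  · exact Or.inl h'
  · exact Or.inr (by linear_combination h')

lemma herSub_vanish {a x : C(Y,ℂ)} (hx : x ∈ herSub Set.univ a) {y : Y} (hy : a y = 0) :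
    x y = 0 := by
  have hmap : Set.MapsTo (fun f : C(Y,ℂ) => f y)
      {x | ∃ b ∈ (Set.univ : Set C(Y,ℂ)), x = a * b * a} ({0} : Set ℂ) := by
    rintro z ⟨b, -, rfl⟩
    simp [hy]
  have := map_mem_closure (continuous_eval_const y) hx hmap
  simpa using this

lemma self_mem_herSub {g : C(Y,ℂ)} (hg : 0 ≤ g) : g ∈ herSub Set.univ g := by
  rw [herSub, Metric.mem_closure_iff]
  intro ε hε
  set c : ℝ := ε / 2 with hc
  have hc0 : 0 < c := by positivity
  have hne : ∀ y, g y + (c : ℂ) ≠ 0 := by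
    intro y hcontra
    have := congrArg Complex.re hcontra
    simp at this
    have h1 := (nonneg_apply hg y).2
    linarith
  set b : C(Y,ℂ) := ⟨fun y => (g y + (c:ℂ))⁻¹,
      (g.continuous.add continuous_const).inv₀ hne⟩ with hb
  refine ⟨g * b * g, ⟨b, Set.mem_univ _, rfl⟩, ?_⟩
  rw [dist_eq_norm]
  have hle : ‖g - g * b * g‖ ≤ c := by
    rw [ContinuousMap.norm_le _ hc0.le]
    intro y
    obtain ⟨him, hre⟩ := nonneg_apply hg y
    set r : ℝ := (g y).re with hr
    have hgy : g y = (r : ℂ) := Complex.ext rfl (by simp [him])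
    simp only [hb, ContinuousMap.sub_apply, ContinuousMap.mul_apply, ContinuousMap.coe_mk]
    rw [hgy]
    have hrc0 : (0:ℝ) < r + c := by linarith
    have hrc : (r : ℂ) + (c:ℂ) ≠ 0 := by
      rw [← Complex.ofReal_add]
      exact_mod_cast hrc0.ne'
    have : (r:ℂ) - (r:ℂ) * ((r:ℂ) + c)⁻¹ * (r:ℂ) = ((r * c / (r + c) : ℝ) : ℂ) := by
      push_cast
      field_simp
      ring
    rw [this, Complex.norm_real, Real.norm_eq_abs, abs_of_nonneg (by positivity),
      div_le_iff₀ hrc0]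
    nlinarith
  linarith
end Aux

section Char
open WeakDual
variable {Y : Type*} [TopologicalSpace Y] [CompactSpace Y] [T2Space Y]
variable (D : StarSubalgebra ℂ C(Y, ℂ))

/-- Evaluation at a point, as a character of a unital subalgebra of C(Y,ℂ). -/
noncomputable def evalChar (y : Y) : characterSpace ℂ D :=
  ⟨((ContinuousMap.evalCLM ℂ y).comp (Subalgebra.toSubmodule D.toSubalgebra).subtypeL :
      ↥D →L[ℂ] ℂ), by
    constructor
    · intro h0
      have h1 : ((1 : ↥D) : C(Y,ℂ)) y = 0 := congrArg (fun φ : WeakDual ℂ ↥D => φ 1) h0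
      simp at h1
    · intro a b
      show ((a * b : ↥D) : C(Y,ℂ)) y = _
      have : ((a * b : ↥D) : C(Y,ℂ)) = (a : C(Y,ℂ)) * (b : C(Y,ℂ)) := rfl
      rw [this]
      simp
      rfl⟩

@[simp] lemma evalChar_apply (y : Y) (d : ↥D) : evalChar D y d = (d : C(Y,ℂ)) y := rfl

lemma evalChar_continuous : Continuous (evalChar D) := by
  apply Continuous.subtype_mk
  apply WeakDual.continuous_of_continuous_eval
  intro d
  exact (d : C(Y,ℂ)).continuous

theorem char_exists_eval (hD : IsClosed (D : Set C(Y,ℂ))) (ω : characterSpace ℂ D) :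
    ∃ y : Y, ∀ d : ↥D, ω d = (d : C(Y,ℂ)) y := by
  haveI : CompleteSpace ↥D := hD.completeSpace_coe
  by_contra hcon
  push_neg at hcon
  cases isEmpty_or_nonempty Y with
  | inl hY =>
    haveI : Subsingleton C(Y,ℂ) := ⟨fun f g => ContinuousMap.ext fun y => isEmptyElim y⟩
    haveI : Subsingleton ↥D := by infer_instance
    exact isEmptyElim ω
  | inr hY =>
    choose d hd using hcon
    set e : Y → ↥D := fun y => d y - (ω (d y)) • 1 with he
    have hωe : ∀ y, ω (e y) = 0 := by
      intro y
      rw [he]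
      simp only [map_sub, map_smul, map_one, smul_eq_mul, mul_one, sub_self]
    set f : Y → ↥D := fun y => star (e y) * e y with hf
    have hωf : ∀ y, ω (f y) = 0 := fun y => by rw [hf]; simp [map_mul, hωe y]
    have hfval : ∀ y y', ((f y : C(Y,ℂ)) y')
        = ((Complex.normSq ((e y : C(Y,ℂ)) y') : ℝ) : ℂ) := by
      intro y y'
      have h1 : ((f y : ↥D) : C(Y,ℂ)) = star ((e y : C(Y,ℂ))) * (e y : C(Y,ℂ)) := rfl
      rw [h1]
      simp only [ContinuousMap.mul_apply, ContinuousMap.star_apply]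
      rw [Complex.star_def, Complex.normSq_eq_conj_mul_self]
    have hey : ∀ y, ((e y : C(Y,ℂ)) y) ≠ 0 := by
      intro y h0
      apply hd y
      have h1 : ((e y : ↥D) : C(Y,ℂ)) = (d y : C(Y,ℂ)) - (ω (d y)) • 1 := rfl
      rw [h1] at h0
      simp only [ContinuousMap.sub_apply, ContinuousMap.smul_apply, ContinuousMap.one_apply,
        smul_eq_mul, mul_one] at h0
      rw [sub_eq_zero] at h0
      exact h0.symm
    have hcover : (Set.univ : Set Y) ⊆ ⋃ y : Y, {y' | (f y : C(Y,ℂ)) y' ≠ 0} := by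
      intro y _
      refine Set.mem_iUnion.mpr ⟨y, ?_⟩
      rw [Set.mem_setOf_eq, hfval]
      simpa [Complex.normSq_eq_zero] using hey y
    obtain ⟨t, ht⟩ := isCompact_univ.elim_finite_subcover
      (fun y : Y => {y' | (f y : C(Y,ℂ)) y' ≠ 0})
      (fun y => (isClosed_eq ((f y : C(Y,ℂ)).continuous) continuous_const).isOpen_compl) hcover
    set F : ↥D := ∑ y ∈ t, f y with hF
    have hωF : ω F = 0 := by rw [hF, map_sum]; simp [hωf]
    set G : Y → ℝ := fun y' => ∑ y ∈ t, Complex.normSq ((e y : C(Y,ℂ)) y') with hG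
    have hGcont : Continuous G := by
      apply continuous_finset_sum
      intro i _
      exact Complex.continuous_normSq.comp (e i : C(Y,ℂ)).continuous
    have hFcoe : ∀ y', ((F : C(Y,ℂ)) y') = ((G y' : ℝ) : ℂ) := by
      intro y'
      have h1 : ((F : ↥D) : C(Y,ℂ)) = ∑ y ∈ t, ((f y : ↥D) : C(Y,ℂ)) := by
        rw [hF]; exact AddSubmonoidClass.coe_finset_sum _ _
      rw [h1, ContinuousMap.coe_sum, Finset.sum_apply, hG]
      push_cast
      exact Finset.sum_congr rfl fun i _ => hfval i y'
    have hGpos : ∀ y', 0 < G y' := by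
      intro y'
      obtain ⟨i, hi, hne⟩ := Set.mem_iUnion₂.mp (ht (Set.mem_univ y'))
      rw [hG]
      refine Finset.sum_pos' (fun j _ => Complex.normSq_nonneg _) ⟨i, hi, ?_⟩
      have : Complex.normSq ((e i : C(Y,ℂ)) y') ≠ 0 := by
        intro h0
        apply hne
        rw [Set.mem_setOf_eq] at *
        rw [hfval, h0]
        norm_num
      exact lt_of_le_of_ne (Complex.normSq_nonneg _) (Ne.symm this)
    obtain ⟨y₀, -, hy₀⟩ := isCompact_univ.exists_isMinOn Set.univ_nonempty hGcont.continuousOn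
    rw [isMinOn_iff] at hy₀
    set m : ℝ := G y₀ with hm
    have hm0 : 0 < m := hGpos y₀
    set M : ℝ := ‖F‖ with hM
    have hMnorm : ‖(F : C(Y,ℂ))‖ = M := rfl
    have hGleM : ∀ y', G y' ≤ M := by
      intro y'
      have := (F : C(Y,ℂ)).norm_coe_le_norm y'
      rw [hFcoe y'] at this
      rw [Complex.norm_real, Real.norm_eq_abs, abs_of_nonneg (hGpos y').le] at this
      exact this.trans_eq hMnorm
    have hM0 : 0 < M := lt_of_lt_of_le hm0 (hGleM y₀)
    set T : ↥D := 1 - (M⁻¹ : ℂ) • F with hT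
    have hTnorm : ‖T‖ < 1 := by
      show ‖((T : ↥D) : C(Y,ℂ))‖ < 1
      have hTcoe : ((T : ↥D) : C(Y,ℂ)) = 1 - (M⁻¹ : ℂ) • (F : C(Y,ℂ)) := rfl
      rw [hTcoe, ContinuousMap.norm_lt_iff _ one_pos]
      intro y'
      simp only [ContinuousMap.sub_apply, ContinuousMap.smul_apply, ContinuousMap.one_apply,
        smul_eq_mul]
      rw [hFcoe y']
      have heq : (1 : ℂ) - (M⁻¹ : ℂ) * ((G y' : ℝ) : ℂ)
          = ((1 - M⁻¹ * G y' : ℝ) : ℂ) := by push_cast; ring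
      rw [heq, Complex.norm_real, Real.norm_eq_abs]
      have h1 : M⁻¹ * G y' ≤ 1 := by
        rw [inv_mul_le_iff₀ hM0, mul_one]
        exact hGleM y'
      have h2 : M⁻¹ * m ≤ M⁻¹ * G y' :=
        mul_le_mul_of_nonneg_left (hy₀ y' (Set.mem_univ _)) (inv_nonneg.mpr hM0.le)
      rw [abs_of_nonneg (by linarith)]
      have h3 : 0 < M⁻¹ * m := by positivity
      linarith
    have hunit : IsUnit ((M⁻¹ : ℂ) • F) := by
      have := (Units.oneSub T hTnorm).isUnit
      simpa [hT, sub_sub_cancel] using this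
    obtain ⟨u, hu⟩ := hunit
    have h1 : ω ((M⁻¹ : ℂ) • F) = 0 := by rw [map_smul, hωF, smul_zero]
    have h2 : (1 : ℂ) = 0 := by
      calc (1:ℂ) = ω 1 := (map_one ω).symm
      _ = ω ((u : ↥D) * ((u⁻¹ : (↥D)ˣ) : ↥D)) := by rw [Units.mul_inv]
      _ = ω (u : ↥D) * ω ((u⁻¹ : (↥D)ˣ) : ↥D) := map_mul ω _ _
      _ = 0 := by rw [hu, h1, zero_mul]
    exact one_ne_zero h2

lemma evalChar_surjective (hD : IsClosed (D : Set C(Y,ℂ))) :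
    Function.Surjective (evalChar D) := by
  intro ω
  obtain ⟨y, hy⟩ := char_exists_eval D hD ω
  exact ⟨y, WeakDual.CharacterSpace.ext fun d => ((hy d).symm)⟩

end Char

lemma nonneg_mk {Y : Type*} [TopologicalSpace Y] [CompactSpace Y] {g : C(Y,ℂ)}
    (h : ∀ y, (g y).im = 0 ∧ 0 ≤ (g y).re) : 0 ≤ g :=
  ContinuousMap.le_def.mpr fun y => Complex.le_def.mpr
    ⟨by simpa using (h y).2, by simp [(h y).1]⟩

/-- The equalizer of two points, as a closed star subalgebra of C(Y,ℂ). -/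
noncomputable def eqD {Y : Type*} [TopologicalSpace Y] (y₁ y₂ : Y) :
    StarSubalgebra ℂ C(Y,ℂ) where
  carrier := {f : C(Y,ℂ) | f y₁ = f y₂}
  mul_mem' := by
    intro f g hf hg
    simp only [Set.mem_setOf_eq, ContinuousMap.mul_apply] at *
    rw [hf, hg]
  one_mem' := by simp
  add_mem' := by
    intro f g hf hg
    simp only [Set.mem_setOf_eq, ContinuousMap.add_apply] at *
    rw [hf, hg]
  zero_mem' := by simp
  algebraMap_mem' := by intro c; simp
  star_mem' := by
    intro f hf
    simp only [Set.mem_setOf_eq, ContinuousMap.star_apply] at *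
    rw [hf]

lemma eqD_closed {Y : Type*} [TopologicalSpace Y] (y₁ y₂ : Y) :
    IsClosed ((eqD y₁ y₂ : StarSubalgebra ℂ C(Y,ℂ)) : Set C(Y,ℂ)) :=
  isClosed_eq (continuous_eval_const y₁) (continuous_eval_const y₂)

lemma exists_sep_proj {X Y : Type*} [TopologicalSpace X] [CompactSpace X] [T2Space X]
    [TopologicalSpace Y] [CompactSpace Y] [T2Space Y] (φ : C(Y, X))
    (h : InclusionRealRankZero (Set.range fun f : C(X, ℂ) => f.comp φ) (Set.univ : Set C(Y, ℂ)))
    (r : C(X, ℝ)) (y₁ y₂ : Y) (s : ℝ) (h1 : s < r (φ y₁)) (h2 : r (φ y₂) < s) :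
    ∃ q : C(Y,ℂ), IsProjection q ∧ q y₁ = 1 ∧ q y₂ = 0 := by
  set f' : C(X,ℂ) := ⟨fun x => ((max (r x - s) 0 : ℝ) : ℂ),
    Complex.continuous_ofReal.comp ((r.continuous.sub continuous_const).max continuous_const)⟩
    with hf'
  set g : C(Y,ℂ) := f'.comp φ with hg
  have hgval : ∀ y, g y = ((max (r (φ y) - s) 0 : ℝ) : ℂ) := fun y => rfl
  have hg0 : 0 ≤ g := nonneg_mk fun y => by
    rw [hgval]; exact ⟨Complex.ofReal_im _, by simpa using le_max_right _ 0⟩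
  set δ : ℝ := r (φ y₁) - s with hδ
  have hδ0 : 0 < δ := by rw [hδ]; linarith
  have hgy₁ : g y₁ = ((δ : ℝ) : ℂ) := by rw [hgval, hδ, max_eq_left (by linarith)]
  have hgy₂ : g y₂ = 0 := by rw [hgval, max_eq_right (by linarith)]; simp
  have hgne : g ≠ 0 := by
    intro h0
    rw [h0] at hgy₁
    simp only [ContinuousMap.zero_apply] at hgy₁
    exact hδ0.ne (by exact_mod_cast hgy₁)
  obtain ⟨p, hpmem, hpproj, hpnorm⟩ :=
    h g ⟨f', rfl⟩ hg0 hgne g (self_mem_herSub hg0) hg0 δ hδ0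
  refine ⟨p, hpproj, ?_, herSub_vanish hpmem hgy₂⟩
  rcases proj_values hpproj y₁ with h0 | h1
  · exfalso
    have hb := (p * g - g).norm_coe_le_norm y₁
    rw [ContinuousMap.sub_apply, ContinuousMap.mul_apply, h0, zero_mul, zero_sub, norm_neg,
      hgy₁] at hb
    rw [Complex.norm_real, Real.norm_eq_abs, abs_of_pos hδ0] at hb
    linarith
  · exact h1


set_option synthInstance.maxHeartbeats 1000000 in
theorem stmt11 {X Y : Type*} [TopologicalSpace X] [CompactSpace X] [T2Space X]
    [TopologicalSpace Y] [CompactSpace Y] [T2Space Y]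
    (φ : C(Y, X)) (hφ : Function.Surjective φ) :
    InclusionRealRankZero (Set.range fun f : C(X, ℂ) => f.comp φ) (Set.univ : Set C(Y, ℂ)) ↔
      ∃ D : StarSubalgebra ℂ C(Y, ℂ), IsClosed (D : Set C(Y, ℂ)) ∧
        (Set.range fun f : C(X, ℂ) => f.comp φ) ⊆ (D : Set C(Y, ℂ)) ∧
        TotallyDisconnectedSpace (WeakDual.characterSpace ℂ D) := by
  constructor
  · intro h
    classical
    set A : Set C(Y,ℂ) := Set.range fun f : C(X, ℂ) => f.comp φ with hA
    set S : Set C(Y,ℂ) := A ∪ {p | IsProjection p} with hS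
    set D : StarSubalgebra ℂ C(Y,ℂ) := (StarAlgebra.adjoin ℂ S).topologicalClosure with hD
    have hDclosed : IsClosed (D : Set C(Y,ℂ)) :=
      StarSubalgebra.isClosed_topologicalClosure _
    have hSD : S ⊆ (D : Set C(Y,ℂ)) := fun z hz =>
      (StarAlgebra.adjoin ℂ S).le_topologicalClosure (StarAlgebra.subset_adjoin ℂ S hz)
    refine ⟨D, hDclosed, fun z hz => hSD (Or.inl hz), ?_⟩
    constructor
    refine (totallySeparatedSpace_iff_exists_isClopen.mpr ?_).isTotallySeparated_univ.isTotallyDisconnected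
    intro ω₁ ω₂ hne
    obtain ⟨y₁, hy₁⟩ := char_exists_eval D hDclosed ω₁
    obtain ⟨y₂, hy₂⟩ := char_exists_eval D hDclosed ω₂
    -- find a projection in D separating y₁ and y₂
    have hq : ∃ q : C(Y,ℂ), q ∈ D ∧ IsProjection q ∧ q y₁ ≠ q y₂ := by
      by_contra hq
      push_neg at hq
      have hproj : ∀ q : C(Y,ℂ), IsProjection q → q y₁ = q y₂ := fun q hq' =>
        hq q (hSD (Or.inr hq')) hq'
      have hreal : ∀ r : C(X, ℝ), r (φ y₁) = r (φ y₂) := by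
        intro r
        by_contra hr
        rcases lt_or_gt_of_ne hr with hlt | hgt
        · obtain ⟨q, hqp, hq1, hq2⟩ := exists_sep_proj φ h r y₂ y₁
            ((r (φ y₁) + r (φ y₂))/2) (by linarith) (by linarith)
          exact (by rw [hproj q hqp, hq1] at hq2; exact one_ne_zero hq2 : False)
        · obtain ⟨q, hqp, hq1, hq2⟩ := exists_sep_proj φ h r y₁ y₂
            ((r (φ y₁) + r (φ y₂))/2) (by linarith) (by linarith)
          exact (by rw [← hproj q hqp, hq1] at hq2; exact one_ne_zero hq2 : False)
      have hAagree : ∀ a ∈ A, a y₁ = a y₂ := by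
        rintro a ⟨f, rfl⟩
        have hre := hreal ⟨fun x => (f x).re, Complex.continuous_re.comp f.continuous⟩
        have him := hreal ⟨fun x => (f x).im, Complex.continuous_im.comp f.continuous⟩
        simp only [ContinuousMap.coe_mk] at hre him
        show f (φ y₁) = f (φ y₂)
        exact Complex.ext hre him
      have hgen : S ⊆ ((eqD y₁ y₂ : StarSubalgebra ℂ C(Y,ℂ)) : Set C(Y,ℂ)) := by
        rintro z (hz | hz)
        · exact hAagree z hz
        · exact hproj z hz
      have hDle : D ≤ eqD y₁ y₂ :=
        StarSubalgebra.topologicalClosure_minimal (StarAlgebra.adjoin_le hgen)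
          (eqD_closed y₁ y₂)
      apply hne
      apply WeakDual.CharacterSpace.ext
      intro d
      rw [hy₁ d, hy₂ d]
      exact hDle d.2
    obtain ⟨q, hqD, hqproj, hqne⟩ := hq
    set q' : ↥D := ⟨q, hqD⟩ with hq'
    have hval : ∀ ω : WeakDual.characterSpace ℂ D, ω q' = q y₁ ∨ ω q' = q y₂ := by
      intro ω
      obtain ⟨y, hy⟩ := char_exists_eval D hDclosed ω
      rw [hy q']
      show q y = q y₁ ∨ q y = q y₂
      rcases proj_values hqproj y with h0 | h1 <;>
        rcases proj_values hqproj y₁ with ha | ha <;>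
        rcases proj_values hqproj y₂ with hb | hb <;>
        simp_all
    refine ⟨{ω : WeakDual.characterSpace ℂ D | ω q' = q y₁}, ⟨?_, ?_⟩, ?_, ?_⟩
    · exact isClosed_eq ((WeakDual.eval_continuous q').comp continuous_subtype_val)
        continuous_const
    · rw [← isClosed_compl_iff]
      have hcompl : {ω : WeakDual.characterSpace ℂ D | ω q' = q y₁}ᶜ
          = {ω : WeakDual.characterSpace ℂ D | ω q' = q y₂} := by
        ext ω
        simp only [Set.mem_compl_iff, Set.mem_setOf_eq]
        constructor
        · intro hω
          rcases hval ω with h' | h'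
          · exact absurd h' hω
          · exact h'
        · intro hω h'
          have : q y₁ = q y₂ := by rw [← h', ← hω]
          exact hqne this
      rw [hcompl]
      exact isClosed_eq ((WeakDual.eval_continuous q').comp continuous_subtype_val)
        continuous_const
    · show ω₁ q' = q y₁
      exact hy₁ q'
    · show ¬ ω₂ q' = q y₁
      rw [hy₂ q']
      exact fun hc => hqne hc.symm
  · rintro ⟨D, hDclosed, hAD, hTD⟩
    intro a ha ha0 hane x hx hx0 ε hε
    haveI : CompleteSpace ↥D := hDclosed.completeSpace_coe
    haveI := hTD
    set ψ := evalChar D with hψ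
    haveI : CompactSpace (WeakDual.characterSpace ℂ D) := by
      constructor
      rw [← (evalChar_surjective D hDclosed).range_eq]
      exact isCompact_range (evalChar_continuous D)
    set a' : ↥D := ⟨a, hAD ha⟩ with ha'
    -- the open set of characters not vanishing at a
    set W : Set (WeakDual.characterSpace ℂ D) := {ω | ω a' ≠ 0} with hW
    have hWopen : IsOpen W := by
      have hcont : Continuous fun ω : WeakDual.characterSpace ℂ D => ω a' :=
        (WeakDual.eval_continuous a').comp continuous_subtype_val
      exact (isClosed_eq hcont continuous_const).isOpen_compl
    -- the compact set where x is not small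
    set K0 : Set Y := {y | ε/2 ≤ ‖x y‖} with hK0
    have hK0closed : IsClosed K0 := isClosed_le continuous_const (x.continuous.norm)
    set K : Set (WeakDual.characterSpace ℂ D) := ψ '' K0 with hK
    have hKcompact : IsCompact K := (hK0closed.isCompact).image (evalChar_continuous D)
    have hKW : K ⊆ W := by
      rintro ω ⟨y, hy, rfl⟩
      have hay : a y ≠ 0 := by
        intro h0
        have hxy := herSub_vanish hx h0
        have hy' : ε/2 ≤ ‖x y‖ := hy
        rw [hxy] at hy'
        simp at hy'
        linarith
      simpa [hψ, hW, ha'] using hay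
    obtain ⟨V, hVclopen, hKV, hVW⟩ := compact_subset_clopen hKcompact hWopen hKW
    set U : Set Y := ψ ⁻¹' V with hU
    have hUclopen : IsClopen U := ⟨hVclopen.1.preimage (evalChar_continuous D),
      hVclopen.2.preimage (evalChar_continuous D)⟩
    have haU : ∀ y ∈ U, a y ≠ 0 := by
      intro y hy
      have : ψ y ∈ W := hVW hy
      simpa [hψ, hW, ha'] using this
    refine ⟨indC U hUclopen, indC_mem_herSub hUclopen haU, indC_isProjection hUclopen, ?_⟩
    rw [ContinuousMap.norm_lt_iff _ hε]
    intro y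
    by_cases hy : y ∈ U
    · simp [ContinuousMap.mul_apply, ContinuousMap.sub_apply, indC_apply, if_pos hy, hε]
    · have hyK0 : y ∉ K0 := fun hyK0 => hy (hKV ⟨y, hyK0, rfl⟩)
      rw [hK0, Set.mem_setOf_eq, not_le] at hyK0
      simp only [ContinuousMap.sub_apply, ContinuousMap.mul_apply, indC_apply, if_neg hy]
      rw [zero_mul, zero_sub, norm_neg]
      linarith
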